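/- Let ω₀ > 0, γ > 0, and let ω(k) := √(ω₀² + 4 sin²(πk)) be the nearest-neighbour dispersion relation on 𝕋 = ℝ/ℤ. Then the phonon velocity v(k) := ω'(k)/(2π) equals sin(2πk)/ω(k), and the kinetic-theory thermal conductivity κ(L) := γ^{−1} L^{−1} Σ_{k∈Λ_L*} v(k)² satisfies lim_{L→∞} κ(L) = γ^{−1} ∫₀¹ sin²(πx) / (ω₀² + 4 sin²(πx/2)) dx, which is the steady-state thermal conductivity of the self-consistent heat bath model. -/

import Mathlib

open Real Filter

/-- The discrete circle of `L` sites, represented by integers: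
`{−(L−1)/2, …, (L−1)/2}` for odd `L` and `{−L/2+1, …, L/2}` for even `L`.
The dual lattice `Λ_L*` is identified with `Λ_L` via `k ↦ k/L`. -/
noncomputable def Lambda (L : ℕ) : Finset ℤ := Finset.Ioc ((L : ℤ) / 2 - L) ((L : ℤ) / 2)

/-- The nearest-neighbour dispersion relation `ω(k) = √(ω₀² + 4 sin²(πk))`. -/
noncomputable def nnDispersion (ω₀ : ℝ) (k : ℝ) : ℝ :=
  Real.sqrt (ω₀ ^ 2 + 4 * Real.sin (π * k) ^ 2)

/-- The phonon velocity `v(k) = ω'(k)/(2π)`. -/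
noncomputable def phononVelocity (ω₀ : ℝ) (k : ℝ) : ℝ :=
  deriv (nnDispersion ω₀) k / (2 * π)

/-- The summand `v(k)²` as an explicit rational expression. -/
noncomputable def Fv (ω₀ : ℝ) (k : ℝ) : ℝ :=
  Real.sin (2 * π * k) ^ 2 / (ω₀ ^ 2 + 4 * Real.sin (π * k) ^ 2)

lemma den_pos (ω₀ : ℝ) (hω₀ : 0 < ω₀) (k : ℝ) :
    0 < ω₀ ^ 2 + 4 * Real.sin (π * k) ^ 2 := by positivity

lemma nnDispersion_pos (ω₀ : ℝ) (hω₀ : 0 < ω₀) (k : ℝ) : 0 < nnDispersion ω₀ k :=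
  Real.sqrt_pos.2 (den_pos ω₀ hω₀ k)

lemma deriv_nnDispersion (ω₀ : ℝ) (hω₀ : 0 < ω₀) (k : ℝ) :
    deriv (nnDispersion ω₀) k = 2 * π * Real.sin (2 * π * k) / nnDispersion ω₀ k := by
  have hinner : HasDerivAt (fun k : ℝ => ω₀ ^ 2 + 4 * Real.sin (π * k) ^ 2)
      (4 * π * (2 * Real.sin (π * k) * Real.cos (π * k))) k := by
    have h1 : HasDerivAt (fun k : ℝ => Real.sin (π * k)) (Real.cos (π * k) * π) k :=
      (Real.hasDerivAt_sin (π * k)).comp k (by simpa using (hasDerivAt_id k).const_mul π)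
    have h2 := ((h1.pow 2).const_mul (4:ℝ)).const_add (ω₀ ^ 2)
    exact h2.congr_deriv (by norm_num; ring)
  have hne : ω₀ ^ 2 + 4 * Real.sin (π * k) ^ 2 ≠ 0 := (den_pos ω₀ hω₀ k).ne'
  have h := (Real.hasDerivAt_sqrt hne).comp k hinner
  have : HasDerivAt (nnDispersion ω₀)
      (1 / (2 * Real.sqrt (ω₀ ^ 2 + 4 * Real.sin (π * k) ^ 2)) *
        (4 * π * (2 * Real.sin (π * k) * Real.cos (π * k)))) k := h
  rw [this.deriv]
  rw [show (2:ℝ) * Real.sin (π * k) * Real.cos (π * k) = Real.sin (2 * (π * k)) by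
    rw [Real.sin_two_mul]]
  rw [nnDispersion]
  field_simp
  ring_nf

lemma phononVelocity_eq (ω₀ : ℝ) (hω₀ : 0 < ω₀) (k : ℝ) :
    phononVelocity ω₀ k = Real.sin (2 * π * k) / nnDispersion ω₀ k := by
  rw [phononVelocity, deriv_nnDispersion ω₀ hω₀ k]
  have h1 : nnDispersion ω₀ k ≠ 0 := (nnDispersion_pos ω₀ hω₀ k).ne'
  have h2 : (2:ℝ) * π ≠ 0 := by positivity
  field_simp

lemma phononVelocity_sq (ω₀ : ℝ) (hω₀ : 0 < ω₀) (k : ℝ) :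
    phononVelocity ω₀ k ^ 2 = Fv ω₀ k := by
  rw [phononVelocity_eq ω₀ hω₀ k, div_pow, Fv, nnDispersion,
    Real.sq_sqrt (den_pos ω₀ hω₀ k).le]

lemma Fv_continuous (ω₀ : ℝ) (hω₀ : 0 < ω₀) : Continuous (Fv ω₀) := by
  apply Continuous.div
  · fun_prop
  · fun_prop
  · exact fun k => (den_pos ω₀ hω₀ k).ne'

lemma Fv_periodic (ω₀ : ℝ) : Function.Periodic (Fv ω₀) 1 := by
  intro x
  simp only [Fv, mul_add, mul_one]
  rw [show 2 * π * x + 2 * π = 2 * π * x + 2 * π by ring, Real.sin_add,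
    Real.sin_two_pi, Real.cos_two_pi, Real.sin_add, Real.sin_pi, Real.cos_pi]
  ring_nf

lemma Fv_reflect (ω₀ : ℝ) (x : ℝ) : Fv ω₀ (1 - x) = Fv ω₀ x := by
  simp only [Fv, mul_sub, mul_one]
  rw [Real.sin_sub, Real.sin_two_pi, Real.cos_two_pi, Real.sin_sub, Real.sin_pi, Real.cos_pi]
  ring_nf

/-- General Riemann sum convergence for continuous functions. -/
lemma tendsto_riemann_sum (f : ℝ → ℝ) (hf : Continuous f) :
    Tendsto (fun n : ℕ => (n : ℝ)⁻¹ * ∑ i ∈ Finset.range n, f (i / n)) atTop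
      (nhds (∫ x in (0:ℝ)..1, f x)) := by
  rw [Metric.tendsto_atTop]
  intro ε hε
  have hu : UniformContinuousOn f (Set.Icc (0:ℝ) 1) :=
    (isCompact_Icc).uniformContinuousOn_of_continuous hf.continuousOn
  rw [Metric.uniformContinuousOn_iff] at hu
  obtain ⟨δ, hδ, H⟩ := hu (ε/2) (half_pos hε)
  obtain ⟨N, hN⟩ := exists_nat_one_div_lt hδ
  refine ⟨N + 1, fun n hn => ?_⟩
  have hn1 : 1 ≤ n := le_trans (Nat.le_add_left 1 N) hn
  have hnR : (0:ℝ) < n := by exact_mod_cast hn1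
  have hstep : (1:ℝ)/n < δ := by
    apply lt_of_le_of_lt _ hN
    apply div_le_div_of_nonneg_left one_pos.le (by positivity)
    exact_mod_cast hn
  -- the integral as a sum of small integrals
  have hint : ∀ (a b : ℝ), IntervalIntegrable f MeasureTheory.volume a b :=
    fun a b => hf.intervalIntegrable a b
  have hsplit : ∫ x in (0:ℝ)..1, f x
      = ∑ i ∈ Finset.range n, ∫ x in ((i:ℝ)/n)..(((i:ℝ)+1)/n), f x := by
    have h := intervalIntegral.sum_integral_adjacent_intervals (a := fun i : ℕ => (i:ℝ)/n)
      (f := f) (n := n) (fun i _ => hint _ _)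
    simp only [Nat.cast_add, Nat.cast_one, Nat.cast_zero] at h
    rw [h, zero_div, div_self hnR.ne']
  have hconst : (n : ℝ)⁻¹ * ∑ i ∈ Finset.range n, f ((i:ℝ) / n)
      = ∑ i ∈ Finset.range n, ∫ _x in ((i:ℝ)/n)..(((i:ℝ)+1)/n), f ((i:ℝ)/n) := by
    rw [Finset.mul_sum]
    refine Finset.sum_congr rfl fun i _ => ?_
    rw [intervalIntegral.integral_const]
    rw [show ((i:ℝ)+1)/n - (i:ℝ)/n = (n:ℝ)⁻¹ by field_simp; ring]
    simp [smul_eq_mul]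
  rw [Real.dist_eq, hconst, hsplit, ← Finset.sum_sub_distrib]
  calc |∑ i ∈ Finset.range n,
        ((∫ _x in ((i:ℝ)/n)..(((i:ℝ)+1)/n), f ((i:ℝ)/n)) - ∫ x in ((i:ℝ)/n)..(((i:ℝ)+1)/n), f x)|
      ≤ ∑ i ∈ Finset.range n, (ε/2) * (1/n) := by
        apply le_trans (Finset.abs_sum_le_sum_abs _ _)
        apply Finset.sum_le_sum
        intro i hi
        have hsub : (∫ _x in ((i:ℝ)/n)..(((i:ℝ)+1)/n), f ((i:ℝ)/n))
              - ∫ x in ((i:ℝ)/n)..(((i:ℝ)+1)/n), f x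
            = ∫ x in ((i:ℝ)/n)..(((i:ℝ)+1)/n), (f ((i:ℝ)/n) - f x) := by
          rw [intervalIntegral.integral_sub intervalIntegrable_const (hint _ _)]
        rw [hsub]
        have hi' : (i:ℝ) + 1 ≤ n := by
          have : i + 1 ≤ n := Finset.mem_range.1 hi
          exact_mod_cast this
        have hib : ((i:ℝ)/n) ≤ ((i:ℝ)+1)/n := by gcongr; linarith
        have key : ∀ x ∈ Set.uIoc ((i:ℝ)/n) (((i:ℝ)+1)/n),
            ‖f ((i:ℝ)/n) - f x‖ ≤ ε/2 := by
          intro x hx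
          rw [Set.uIoc_of_le hib] at hx
          obtain ⟨hx1, hx2⟩ := hx
          have hxm : x ∈ Set.Icc (0:ℝ) 1 := by
            constructor
            · exact le_trans (by positivity) hx1.le
            · exact le_trans hx2 (by rw [div_le_one hnR]; exact hi')
          have him : (i:ℝ)/n ∈ Set.Icc (0:ℝ) 1 := by
            constructor
            · positivity
            · rw [div_le_one hnR]; linarith
          have hd : dist ((i:ℝ)/n) x < δ := by
            rw [Real.dist_eq, abs_sub_comm, abs_of_nonneg (by linarith [hx1.le])]
            calc x - (i:ℝ)/n ≤ ((i:ℝ)+1)/n - (i:ℝ)/n := by linarith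
              _ = 1/n := by field_simp; ring
              _ < δ := hstep
          exact (H _ him _ hxm hd).le
        have := intervalIntegral.norm_integral_le_of_norm_le_const key
        rw [Real.norm_eq_abs] at this
        apply le_trans this
        rw [show |(((i:ℝ)+1)/n) - ((i:ℝ)/n)| = 1/n by rw [abs_of_nonneg] <;> [skip; linarith [hib]]; field_simp; ring]
    _ = ε/2 := by
        rw [Finset.sum_const, Finset.card_range, nsmul_eq_mul]
        field_simp
    _ < ε := by linarith


lemma sum_lambda (f : ℝ → ℝ) (hf : Function.Periodic f 1) {L : ℕ} (hL : 0 < L) :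
    ∑ p ∈ Lambda L, f ((p:ℝ) / L) = ∑ i ∈ Finset.range L, f ((i:ℝ) / L) := by
  have hLZ : (0:ℤ) < (L:ℤ) := by exact_mod_cast hL
  have hLR : (0:ℝ) < (L:ℝ) := by exact_mod_cast hL
  set c : ℤ := (L:ℤ)/2 with hc
  have hc0 : 0 ≤ c := Int.ediv_nonneg hLZ.le (by norm_num)
  have hcL : c < L := by omega
  refine Finset.sum_nbij' (fun p => (p % L).toNat) (fun k => if (k:ℤ) ≤ c then (k:ℤ) else (k:ℤ) - L)
    ?_ ?_ ?_ ?_ ?_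
  · intro p hp
    simp only [Finset.mem_range]
    have h1 := Int.emod_nonneg p hLZ.ne'
    have h2 := Int.emod_lt_of_pos p hLZ
    omega
  · intro k hk
    simp only [Finset.mem_range] at hk
    simp only [Lambda, Finset.mem_Ioc]
    have : (k:ℤ) < L := by exact_mod_cast hk
    split <;> omega
  · intro p hp
    simp only [Lambda, Finset.mem_Ioc] at hp
    rcases le_or_gt 0 p with h | h
    · have : p % L = p := Int.emod_eq_of_lt h (by omega)
      simp [this]
      omega
    · have hmod : p % L = p + L := by
        have h1 : (p + L) % L = p % L := Int.add_mul_emod_self_left (b := L) (c := 1) (a := p) |>.symm ▸ by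
          simpa using Int.add_mul_emod_self_left (a := p) (b := L) (c := 1)
        rw [← h1, Int.emod_eq_of_lt (by omega) (by omega)]
      simp [hmod]
      omega
  · intro k hk
    simp only [Finset.mem_range] at hk
    have hkL : (k:ℤ) < L := by exact_mod_cast hk
    have hk0 : (0:ℤ) ≤ k := Int.natCast_nonneg k
    beta_reduce
    by_cases hcase : (k:ℤ) ≤ c
    · rw [if_pos hcase, Int.emod_eq_of_lt hk0 hkL]
      simp
    · rw [if_neg hcase]
      have h1 : ((k:ℤ) - L) % L = (k:ℤ) % L := by
        conv_rhs => rw [show (k:ℤ) = (k - L) + L * 1 by ring]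
        rw [Int.add_mul_emod_self_left]
      rw [h1, Int.emod_eq_of_lt hk0 hkL]
      simp
  · intro p hp
    simp only [Lambda, Finset.mem_Ioc] at hp
    beta_reduce
    rcases le_or_gt 0 p with h | h
    · have h2 : p % L = p := Int.emod_eq_of_lt h (by omega)
      rw [h2]
      have h3 : ((p.toNat : ℕ) : ℝ) = (p : ℝ) := by exact_mod_cast Int.toNat_of_nonneg h
      rw [h3]
    · have hmod : p % L = p + L := by
        have h1 : (p + L) % L = p % L := by
          simpa using Int.add_mul_emod_self_left (a := p) (b := L) (c := 1)
        rw [← h1, Int.emod_eq_of_lt (by omega) (by omega)]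
      rw [hmod]
      have hcast : (((p + L).toNat : ℝ)) = (p:ℝ) + L := by
        have h0 : (0:ℤ) ≤ p + L := by omega
        exact_mod_cast Int.toNat_of_nonneg h0
      rw [hcast, show ((p:ℝ) + L) / L = (p:ℝ)/L + 1 by field_simp]
      exact (hf ((p:ℝ)/L)).symm

lemma integral_eq (ω₀ : ℝ) (hω₀ : 0 < ω₀) :
    (∫ x in (0:ℝ)..1, Real.sin (π * x) ^ 2 / (ω₀ ^ 2 + 4 * Real.sin (π * x / 2) ^ 2))
      = ∫ x in (0:ℝ)..1, Fv ω₀ x := by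
  have h1 : (∫ x in (0:ℝ)..1, Real.sin (π * x) ^ 2 / (ω₀ ^ 2 + 4 * Real.sin (π * x / 2) ^ 2))
      = ∫ x in (0:ℝ)..1, Fv ω₀ (x / 2) := by
    refine intervalIntegral.integral_congr fun x _ => ?_
    simp only [Fv]
    norm_num
    rw [show 2 * π * (x / 2) = π * x by ring, show π * (x / 2) = π * x / 2 by ring]
  rw [h1, intervalIntegral.integral_comp_div (f := Fv ω₀) (by norm_num : (2:ℝ) ≠ 0)]
  norm_num
  have h2 : (∫ x in (0:ℝ)..(1/2:ℝ), Fv ω₀ (1 - x)) = ∫ x in (1/2:ℝ)..1, Fv ω₀ x := by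
    rw [intervalIntegral.integral_comp_sub_left (Fv ω₀) 1]
    norm_num
  have h3 : (∫ x in (0:ℝ)..(1/2:ℝ), Fv ω₀ (1 - x)) = ∫ x in (0:ℝ)..(1/2:ℝ), Fv ω₀ x :=
    intervalIntegral.integral_congr fun x _ => Fv_reflect ω₀ x
  have h4 : (∫ x in (0:ℝ)..(1/2:ℝ), Fv ω₀ x) + (∫ x in (1/2:ℝ)..1, Fv ω₀ x)
      = ∫ x in (0:ℝ)..1, Fv ω₀ x :=
    intervalIntegral.integral_add_adjacent_intervals
      ((Fv_continuous ω₀ hω₀).intervalIntegrable _ _)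
      ((Fv_continuous ω₀ hω₀).intervalIntegrable _ _)
  linarith [h2, h3, h4]

/-- For the nearest-neighbour chain, `v(k) = sin(2πk)/ω(k)`, and the
kinetic thermal conductivity `κ(L) = γ⁻¹ L⁻¹ Σ_{k∈Λ_L*} v(k)²` converges, as `L → ∞`, to
the conductivity `γ⁻¹ ∫₀¹ sin²(πx)/(ω₀² + 4 sin²(πx/2)) dx` of the self-consistent heat
bath model. -/
theorem kinetic_conductivity_limit (ω₀ γ : ℝ) (hω₀ : 0 < ω₀) (hγ : 0 < γ) :
    (∀ k : ℝ, phononVelocity ω₀ k = Real.sin (2 * π * k) / nnDispersion ω₀ k) ∧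
    Tendsto
      (fun L : ℕ => γ⁻¹ * ((L : ℝ)⁻¹ * ∑ p ∈ Lambda L, phononVelocity ω₀ ((p : ℝ) / L) ^ 2))
      atTop
      (nhds (γ⁻¹ * ∫ x in (0:ℝ)..1,
        Real.sin (π * x) ^ 2 / (ω₀ ^ 2 + 4 * Real.sin (π * x / 2) ^ 2))) := by
  refine ⟨phononVelocity_eq ω₀ hω₀, ?_⟩
  rw [integral_eq ω₀ hω₀]
  have key := (tendsto_riemann_sum (Fv ω₀) (Fv_continuous ω₀ hω₀)).const_mul γ⁻¹
  apply key.congr'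
  filter_upwards [eventually_gt_atTop 0] with L hL
  congr 1
  rw [← sum_lambda (Fv ω₀) (Fv_periodic ω₀) hL]
  congr 1
  exact Finset.sum_congr rfl fun p _ => (phononVelocity_sq ω₀ hω₀ _).symm
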